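/- Let ζ : ℝ^m → [0,∞) be a kernel supported in the closed unit ball with ∫_{ℝ^m} ζ(u) du = 1, let 0 < h ≤ min_i (x_max^i − x_min^i), and let ζ̃_h be the reflected kernel on the hypercube P = ∏_{i=1}^m [x_min^i, x_max^i] obtained from ζ_h(u) = h^{−m}·ζ(u/h) by the recursive boundary-reflection construction. Then for every x ∈ P, ∫_P ζ̃_h(x; y) dy = 1. -/

import Mathlib

open MeasureTheory

/-- The reflected kernel `ζ̃_h^{(i)}` on the hypercube `∏ [xmin i, xmax i]`, built
recursively from the scaled kernel `ζ_h(u) = h^{-m} ζ(u/h)` by reflecting the second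
argument across the two faces in each coordinate direction. -/
noncomputable def reflKer {m : ℕ} (xmin xmax : Fin m → ℝ)
    (ζ : (Fin m → ℝ) → ℝ) (h : ℝ) : ℕ → (Fin m → ℝ) → (Fin m → ℝ) → ℝ
  | 0, x, y => (1 / h ^ m) * ζ (fun i => (x i - y i) / h)
  | (i + 1), x, y =>
      if hi : i < m then
        reflKer xmin xmax ζ h i x y
          + reflKer xmin xmax ζ h i x
              (Function.update y ⟨i, hi⟩ (2 * xmin ⟨i, hi⟩ - y ⟨i, hi⟩))
          + reflKer xmin xmax ζ h i x
              (Function.update y ⟨i, hi⟩ (2 * xmax ⟨i, hi⟩ - y ⟨i, hi⟩))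
      else reflKer xmin xmax ζ h i x y

namespace Stmt11Aux

variable {m : ℕ}

/-- A compact box (hyperrectangle) in `ℝ^m`. -/
def box (c d : Fin m → ℝ) : Set (Fin m → ℝ) := Set.univ.pi fun j => Set.Icc (c j) (d j)

lemma mem_box {c d y : Fin m → ℝ} : y ∈ box c d ↔ ∀ j, c j ≤ y j ∧ y j ≤ d j := by
  simp [box, Set.mem_pi, Set.mem_Icc, Pi.le_def, forall_and]

lemma box_measurable (c d : Fin m → ℝ) : MeasurableSet (box c d) :=
  MeasurableSet.univ_pi fun _ => measurableSet_Icc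

lemma box_congr {c d c' d' : Fin m → ℝ} (hc : ∀ j, c j = c' j) (hd : ∀ j, d j = d' j) :
    box c d = box c' d' := by
  obtain rfl : c = c' := funext hc
  obtain rfl : d = d' := funext hd
  rfl

/-- Reflection of the `i`-th coordinate: `y ↦ update y i (a - y i)`. -/
def refl (i : Fin m) (a : ℝ) (y : Fin m → ℝ) : Fin m → ℝ :=
  Function.update y i (a - y i)

lemma refl_apply (i : Fin m) (a : ℝ) (y : Fin m → ℝ) (j : Fin m) :
    refl i a y j = if j = i then a - y j else y j := by
  rcases eq_or_ne j i with h | h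
  · subst h; simp [refl]
  · simp [refl, Function.update_apply, h]

lemma refl_mp (i : Fin m) (a : ℝ) : MeasurePreserving (refl i a) volume volume := by
  have hcomp : ∀ j : Fin m, MeasurePreserving
      (fun t : ℝ => if j = i then a - t else t) volume volume := by
    intro j
    by_cases hj : j = i
    · simpa [hj] using MeasureTheory.Measure.measurePreserving_sub_left (volume : Measure ℝ) a
    · simp only [if_neg hj]; exact MeasurePreserving.id (volume : Measure ℝ)
  have H := MeasureTheory.volume_preserving_pi
    (f := fun (j : Fin m) (t : ℝ) => if j = i then a - t else t) hcomp
  have heq : refl i a = fun (y : Fin m → ℝ) (j : Fin m) => if j = i then a - y j else y j := by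
    funext y j; rw [refl_apply]
  rw [heq]
  exact H

lemma refl_invol (i : Fin m) (a : ℝ) : Function.Involutive (refl i a) := by
  intro y; funext j
  rcases eq_or_ne j i with h | h
  · subst h; simp [refl_apply]
  · simp [refl_apply, h]

lemma refl_emb (i : Fin m) (a : ℝ) : MeasurableEmbedding (refl i a) := by
  have hinv := refl_invol i a
  have hmeas := (refl_mp i a).measurable
  exact (MeasurableEquiv.mk hinv.toPerm hmeas hmeas).measurableEmbedding

lemma refl_preimage_box (i : Fin m) (a : ℝ) (c d : Fin m → ℝ) :
    refl i a ⁻¹' box c d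
      = box (fun j => if j = i then a - d i else c j)
            (fun j => if j = i then a - c i else d j) := by
  ext y
  simp only [Set.mem_preimage, mem_box]
  refine forall_congr' fun j => ?_
  rcases eq_or_ne j i with h | h
  · subst h
    rw [refl_apply]
    simp only [eq_self_iff_true, if_true]
    constructor <;> (rintro ⟨h1, h2⟩; constructor <;> linarith)
  · rw [refl_apply]; simp [h]

lemma setIntegral_refl (i : Fin m) (a : ℝ) (f : (Fin m → ℝ) → ℝ) (s : Set (Fin m → ℝ)) :
    ∫ y in refl i a ⁻¹' s, f (refl i a y) ∂volume = ∫ y in s, f y ∂volume :=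
  (refl_mp i a).setIntegral_preimage_emb (refl_emb i a) f s

/-- Glueing two adjacent boxes along a face. -/
lemma box_glue (c d : Fin m → ℝ) (i : Fin m) {a b e : ℝ} (hab : a ≤ b) (hbe : b ≤ e)
    {f : (Fin m → ℝ) → ℝ} (hf : Integrable f volume) :
    (∫ y in box (Function.update c i a) (Function.update d i b), f y ∂volume)
      + (∫ y in box (Function.update c i b) (Function.update d i e), f y ∂volume)
      = ∫ y in box (Function.update c i a) (Function.update d i e), f y ∂volume := by
  have hunion : box (Function.update c i a) (Function.update d i b)
      ∪ box (Function.update c i b) (Function.update d i e)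
      = box (Function.update c i a) (Function.update d i e) := by
    ext y
    simp only [Set.mem_union, mem_box, Function.update_apply]
    constructor
    · rintro (H | H) j
      · obtain ⟨h1, h2⟩ := H j
        by_cases h : j = i
        · simp only [if_pos h] at h1 h2 ⊢; exact ⟨h1, h2.trans hbe⟩
        · simp only [if_neg h] at h1 h2 ⊢; exact ⟨h1, h2⟩
      · obtain ⟨h1, h2⟩ := H j
        by_cases h : j = i
        · simp only [if_pos h] at h1 h2 ⊢; exact ⟨hab.trans h1, h2⟩
        · simp only [if_neg h] at h1 h2 ⊢; exact ⟨h1, h2⟩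
    · intro H
      by_cases hyi : y i ≤ b
      · left
        intro j
        obtain ⟨h1, h2⟩ := H j
        by_cases h : j = i
        · subst h; simp only [if_pos rfl] at h1 h2 ⊢; exact ⟨h1, hyi⟩
        · simp only [if_neg h] at h1 h2 ⊢; exact ⟨h1, h2⟩
      · right
        intro j
        obtain ⟨h1, h2⟩ := H j
        by_cases h : j = i
        · subst h; simp only [if_pos rfl] at h1 h2 ⊢; exact ⟨le_of_not_ge hyi, h2⟩
        · simp only [if_neg h] at h1 h2 ⊢; exact ⟨h1, h2⟩
  have hdisj : AEDisjoint volume (box (Function.update c i a) (Function.update d i b))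
      (box (Function.update c i b) (Function.update d i e)) := by
    have hsub : box (Function.update c i a) (Function.update d i b)
        ∩ box (Function.update c i b) (Function.update d i e)
        ⊆ Set.univ.pi fun j =>
            Set.Icc (Function.update c i b j) (Function.update d i b j) := by
      rintro y ⟨hy1, hy2⟩ j _
      rw [mem_box] at hy1 hy2
      obtain ⟨h1, h2⟩ := hy1 j
      obtain ⟨h3, h4⟩ := hy2 j
      by_cases h : j = i
      · subst h
        simp only [Function.update_self] at h1 h2 h3 h4 ⊢
        exact Set.mem_Icc.2 ⟨h3, h2⟩
      · simp only [Function.update_of_ne h] at h1 h2 h3 h4 ⊢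
        exact Set.mem_Icc.2 ⟨h1, h2⟩
    refine measure_mono_null hsub ?_
    rw [volume_pi_pi]
    refine Finset.prod_eq_zero (Finset.mem_univ i) ?_
    simp [Real.volume_Icc]
  rw [← hunion]
  exact (integral_union_ae hdisj (box_measurable _ _).nullMeasurableSet
    hf.integrableOn hf.integrableOn).symm

lemma reflKer_integrable (xmin xmax : Fin m → ℝ) (ζ : (Fin m → ℝ) → ℝ) {h : ℝ} (hh : 0 < h)
    (hζ : Integrable ζ (volume : Measure (Fin m → ℝ))) (x : Fin m → ℝ) :
    ∀ i, Integrable (reflKer xmin xmax ζ h i x) volume := by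
  intro i
  induction i with
  | zero =>
    have e1 : Integrable (fun u : Fin m → ℝ => ζ (h⁻¹ • u)) volume :=
      hζ.comp_smul (inv_ne_zero hh.ne')
    have e2 : Integrable (fun y : Fin m → ℝ => ζ (h⁻¹ • (x - y))) volume :=
      e1.comp_sub_left x
    have e3 : reflKer xmin xmax ζ h 0 x
        = fun y => (1 / h ^ m) * ζ (h⁻¹ • (x - y)) := by
      funext y
      have harg : (fun i => (x i - y i) / h) = h⁻¹ • (x - y) := by
        funext i; simp [div_eq_inv_mul]
      simp only [reflKer, harg]
    rw [e3]
    exact e2.const_mul _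
  | succ i ih =>
    by_cases hi : i < m
    · have e : reflKer xmin xmax ζ h (i + 1) x = fun y =>
          reflKer xmin xmax ζ h i x y
            + reflKer xmin xmax ζ h i x (refl ⟨i, hi⟩ (2 * xmin ⟨i, hi⟩) y)
            + reflKer xmin xmax ζ h i x (refl ⟨i, hi⟩ (2 * xmax ⟨i, hi⟩) y) := by
        funext y
        simp only [reflKer, dif_pos hi]
        rfl
      rw [e]
      have h2 : Integrable
          (fun y => reflKer xmin xmax ζ h i x (refl ⟨i, hi⟩ (2 * xmin ⟨i, hi⟩) y)) volume :=
        ((refl_mp ⟨i, hi⟩ (2 * xmin ⟨i, hi⟩)).integrable_comp_emb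
          (refl_emb ⟨i, hi⟩ (2 * xmin ⟨i, hi⟩))).mpr ih
      have h3 : Integrable
          (fun y => reflKer xmin xmax ζ h i x (refl ⟨i, hi⟩ (2 * xmax ⟨i, hi⟩) y)) volume :=
        ((refl_mp ⟨i, hi⟩ (2 * xmax ⟨i, hi⟩)).integrable_comp_emb
          (refl_emb ⟨i, hi⟩ (2 * xmax ⟨i, hi⟩))).mpr ih
      exact (ih.add h2).add h3
    · have e : reflKer xmin xmax ζ h (i + 1) x = reflKer xmin xmax ζ h i x := by
        funext y
        simp only [reflKer, dif_neg hi]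
      rw [e]
      exact ih

/-- The key induction: integrating the level-`i` reflected kernel over a box whose first `i`
coordinate intervals are `[xmin j, xmax j]` equals integrating the plain scaled kernel over the
box with those intervals extended to `[2 xmin j - xmax j, 2 xmax j - xmin j]`. -/
lemma key (xmin xmax : Fin m → ℝ) (ζ : (Fin m → ℝ) → ℝ) {h : ℝ} (hh : 0 < h)
    (hζ : Integrable ζ (volume : Measure (Fin m → ℝ))) (x : Fin m → ℝ)
    (hmm : ∀ j, xmin j ≤ xmax j) :
    ∀ i, i ≤ m → ∀ c d : Fin m → ℝ, (∀ j, c j ≤ d j) →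
      (∀ j : Fin m, (j : ℕ) < i → c j = xmin j ∧ d j = xmax j) →
      ∫ y in box c d, reflKer xmin xmax ζ h i x y ∂volume
        = ∫ y in box (fun j => if (j : ℕ) < i then 2 * xmin j - xmax j else c j)
            (fun j => if (j : ℕ) < i then 2 * xmax j - xmin j else d j),
            reflKer xmin xmax ζ h 0 x y ∂volume := by
  intro i
  induction i with
  | zero => intro _ c d _ _; simp
  | succ i ih =>
    intro him c d hcd hlow
    have hi : i < m := him
    have him' : i ≤ m := hi.le
    set fi : Fin m := ⟨i, hi⟩ with hfi
    have hcfi : c fi = xmin fi := (hlow fi (Nat.lt_succ_self i)).1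
    have hdfi : d fi = xmax fi := (hlow fi (Nat.lt_succ_self i)).2
    have hlow' : ∀ j : Fin m, (j : ℕ) < i → c j = xmin j ∧ d j = xmax j :=
      fun j hj => hlow j (hj.trans (Nat.lt_succ_self i))
    have hexp : ∀ y, reflKer xmin xmax ζ h (i + 1) x y
        = reflKer xmin xmax ζ h i x y
          + reflKer xmin xmax ζ h i x (refl fi (2 * xmin fi) y)
          + reflKer xmin xmax ζ h i x (refl fi (2 * xmax fi) y) := by
      intro y
      simp only [reflKer, dif_pos hi]
      rfl
    have hint := reflKer_integrable xmin xmax ζ hh hζ x i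
    have hint2 : Integrable (fun y => reflKer xmin xmax ζ h i x (refl fi (2 * xmin fi) y))
        volume :=
      ((refl_mp fi (2 * xmin fi)).integrable_comp_emb (refl_emb fi (2 * xmin fi))).mpr hint
    have hint3 : Integrable (fun y => reflKer xmin xmax ζ h i x (refl fi (2 * xmax fi) y))
        volume :=
      ((refl_mp fi (2 * xmax fi)).integrable_comp_emb (refl_emb fi (2 * xmax fi))).mpr hint
    simp only [hexp]
    have hI1 : IntegrableOn (fun y => reflKer xmin xmax ζ h i x y) (box c d) volume :=
      hint.integrableOn
    have hI2 : IntegrableOn (fun y => reflKer xmin xmax ζ h i x (refl fi (2 * xmin fi) y))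
        (box c d) volume := hint2.integrableOn
    have hI3 : IntegrableOn (fun y => reflKer xmin xmax ζ h i x (refl fi (2 * xmax fi) y))
        (box c d) volume := hint3.integrableOn
    have hI12 : IntegrableOn (fun y => reflKer xmin xmax ζ h i x y
        + reflKer xmin xmax ζ h i x (refl fi (2 * xmin fi) y)) (box c d) volume := hI1.add hI2
    rw [integral_add hI12 hI3, integral_add hI1 hI2]
    -- rewrite the two reflected integrals as integrals over reflected boxes
    have hbox2 : box c d = refl fi (2 * xmin fi) ⁻¹'
        box (Function.update c fi (2 * xmin fi - xmax fi)) (Function.update d fi (xmin fi)) := by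
      rw [refl_preimage_box]
      refine box_congr (fun j => ?_) (fun j => ?_)
      · rcases eq_or_ne j fi with hj | hj
        · subst hj; simp only [eq_self_iff_true, if_true, Function.update_self]; linarith
        · simp only [if_neg hj, Function.update_of_ne hj]
      · rcases eq_or_ne j fi with hj | hj
        · subst hj; simp only [eq_self_iff_true, if_true, Function.update_self]; linarith
        · simp only [if_neg hj, Function.update_of_ne hj]
    have hbox3 : box c d = refl fi (2 * xmax fi) ⁻¹'
        box (Function.update c fi (xmax fi)) (Function.update d fi (2 * xmax fi - xmin fi)) := by
      rw [refl_preimage_box]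
      refine box_congr (fun j => ?_) (fun j => ?_)
      · rcases eq_or_ne j fi with hj | hj
        · subst hj; simp only [eq_self_iff_true, if_true, Function.update_self]; linarith
        · simp only [if_neg hj, Function.update_of_ne hj]
      · rcases eq_or_ne j fi with hj | hj
        · subst hj; simp only [eq_self_iff_true, if_true, Function.update_self]; linarith
        · simp only [if_neg hj, Function.update_of_ne hj]
    have hterm2 : (∫ y in box c d,
          reflKer xmin xmax ζ h i x (refl fi (2 * xmin fi) y) ∂volume)
        = ∫ y in box (Function.update c fi (2 * xmin fi - xmax fi))
            (Function.update d fi (xmin fi)), reflKer xmin xmax ζ h i x y ∂volume := by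
      rw [hbox2]; exact setIntegral_refl _ _ _ _
    have hterm3 : (∫ y in box c d,
          reflKer xmin xmax ζ h i x (refl fi (2 * xmax fi) y) ∂volume)
        = ∫ y in box (Function.update c fi (xmax fi))
            (Function.update d fi (2 * xmax fi - xmin fi)),
            reflKer xmin xmax ζ h i x y ∂volume := by
      rw [hbox3]; exact setIntegral_refl _ _ _ _
    rw [hterm2, hterm3]
    -- auxiliary facts about coordinates
    have hvalne : ∀ j : Fin m, j ≠ fi → (j : ℕ) ≠ i := by
      intro j hj hji
      exact hj (Fin.ext hji)
    -- apply the induction hypothesis to the three boxes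
    have ih1 := ih him' c d hcd hlow'
    have hcd2 : ∀ j, Function.update c fi (2 * xmin fi - xmax fi) j
        ≤ Function.update d fi (xmin fi) j := by
      intro j
      rcases eq_or_ne j fi with hj | hj
      · subst hj
        simp only [Function.update_self]
        have := hmm fi; linarith
      · simp only [Function.update_of_ne hj]; exact hcd j
    have hlow2 : ∀ j : Fin m, (j : ℕ) < i →
        Function.update c fi (2 * xmin fi - xmax fi) j = xmin j
          ∧ Function.update d fi (xmin fi) j = xmax j := by
      intro j hj
      have hne : j ≠ fi := by
        intro hjeq
        rw [hjeq, hfi] at hj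
        exact Nat.lt_irrefl i hj
      simp only [Function.update_of_ne hne]
      exact hlow' j hj
    have ih2 := ih him' _ _ hcd2 hlow2
    have hcd3 : ∀ j, Function.update c fi (xmax fi) j
        ≤ Function.update d fi (2 * xmax fi - xmin fi) j := by
      intro j
      rcases eq_or_ne j fi with hj | hj
      · subst hj
        simp only [Function.update_self]
        have := hmm fi; linarith
      · simp only [Function.update_of_ne hj]; exact hcd j
    have hlow3 : ∀ j : Fin m, (j : ℕ) < i →
        Function.update c fi (xmax fi) j = xmin j
          ∧ Function.update d fi (2 * xmax fi - xmin fi) j = xmax j := by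
      intro j hj
      have hne : j ≠ fi := by
        intro hjeq
        rw [hjeq, hfi] at hj
        exact Nat.lt_irrefl i hj
      simp only [Function.update_of_ne hne]
      exact hlow' j hj
    have ih3 := ih him' _ _ hcd3 hlow3
    rw [ih1, ih2, ih3]
    -- abbreviations for the extended box bounds
    set C : Fin m → ℝ := fun j => if (j : ℕ) < i then 2 * xmin j - xmax j else c j with hC
    set D : Fin m → ℝ := fun j => if (j : ℕ) < i then 2 * xmax j - xmin j else d j with hD
    have hCfi : C fi = xmin fi := by
      rw [hC]; simp only; rw [if_neg (Nat.lt_irrefl i)]; exact hcfi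
    have hDfi : D fi = xmax fi := by
      rw [hD]; simp only; rw [if_neg (Nat.lt_irrefl i)]; exact hdfi
    -- identify the three boxes as updates of `box C D`
    have hb1 : box C D = box (Function.update C fi (xmin fi)) (Function.update D fi (xmax fi)) := by
      refine box_congr (fun j => ?_) (fun j => ?_)
      · rcases eq_or_ne j fi with hj | hj
        · subst hj; simp only [Function.update_self, hCfi]
        · simp only [Function.update_of_ne hj]
      · rcases eq_or_ne j fi with hj | hj
        · subst hj; simp only [Function.update_self, hDfi]
        · simp only [Function.update_of_ne hj]
    have hb2 : box (fun j => if (j : ℕ) < i then 2 * xmin j - xmax j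
            else Function.update c fi (2 * xmin fi - xmax fi) j)
          (fun j => if (j : ℕ) < i then 2 * xmax j - xmin j
            else Function.update d fi (xmin fi) j)
        = box (Function.update C fi (2 * xmin fi - xmax fi))
            (Function.update D fi (xmin fi)) := by
      refine box_congr (fun j => ?_) (fun j => ?_)
      · rcases eq_or_ne j fi with hj | hj
        · subst hj
          rw [if_neg (Nat.lt_irrefl i)]
          simp only [Function.update_self]
        · simp only [Function.update_of_ne hj, hC]
      · rcases eq_or_ne j fi with hj | hj
        · subst hj
          rw [if_neg (Nat.lt_irrefl i)]
          simp only [Function.update_self]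
        · simp only [Function.update_of_ne hj, hD]
    have hb3 : box (fun j => if (j : ℕ) < i then 2 * xmin j - xmax j
            else Function.update c fi (xmax fi) j)
          (fun j => if (j : ℕ) < i then 2 * xmax j - xmin j
            else Function.update d fi (2 * xmax fi - xmin fi) j)
        = box (Function.update C fi (xmax fi))
            (Function.update D fi (2 * xmax fi - xmin fi)) := by
      refine box_congr (fun j => ?_) (fun j => ?_)
      · rcases eq_or_ne j fi with hj | hj
        · subst hj
          rw [if_neg (Nat.lt_irrefl i)]
          simp only [Function.update_self]
        · simp only [Function.update_of_ne hj, hC]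
      · rcases eq_or_ne j fi with hj | hj
        · subst hj
          rw [if_neg (Nat.lt_irrefl i)]
          simp only [Function.update_self]
        · simp only [Function.update_of_ne hj, hD]
    rw [hb1, hb2, hb3]
    -- glue the boxes
    have hK0 : Integrable (reflKer xmin xmax ζ h 0 x) volume :=
      reflKer_integrable xmin xmax ζ hh hζ x 0
    have hab1 : 2 * xmin fi - xmax fi ≤ xmin fi := by have := hmm fi; linarith
    have hab2 : xmin fi ≤ xmax fi := hmm fi
    have hab3 : xmax fi ≤ 2 * xmax fi - xmin fi := by have := hmm fi; linarith
    have hg1 := box_glue C D fi hab1 hab2 hK0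
    have hg2 := box_glue C D fi (hab1.trans hab2) hab3 hK0
    have hfinal : box (Function.update C fi (2 * xmin fi - xmax fi))
          (Function.update D fi (2 * xmax fi - xmin fi))
        = box (fun j => if (j : ℕ) < i + 1 then 2 * xmin j - xmax j else c j)
            (fun j => if (j : ℕ) < i + 1 then 2 * xmax j - xmin j else d j) := by
      refine box_congr (fun j => ?_) (fun j => ?_)
      · rcases eq_or_ne j fi with hj | hj
        · subst hj
          simp only [Function.update_self]
          rw [if_pos (Nat.lt_succ_self i)]
        · have hv : (j : ℕ) ≠ i := fun hji => hj (Fin.ext hji)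
          simp only [Function.update_of_ne hj, hC]
          by_cases hlt : (j : ℕ) < i
          · rw [if_pos hlt, if_pos (by omega)]
          · rw [if_neg hlt, if_neg (by omega)]
      · rcases eq_or_ne j fi with hj | hj
        · subst hj
          simp only [Function.update_self]
          rw [if_pos (Nat.lt_succ_self i)]
        · have hv : (j : ℕ) ≠ i := fun hji => hj (Fin.ext hji)
          simp only [Function.update_of_ne hj, hD]
          by_cases hlt : (j : ℕ) < i
          · rw [if_pos hlt, if_pos (by omega)]
          · rw [if_neg hlt, if_neg (by omega)]
    rw [← hfinal, ← hg2, ← hg1]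
    ring

end Stmt11Aux

/-- the reflected kernel integrates to one over the hypercube:
if `ζ` is supported in the closed unit ball with `∫ ζ = 1` and
`0 < h ≤ min_i (xmax i − xmin i)`, then `∫_P ζ̃_h(x; y) dy = 1` for every `x ∈ P`. -/
theorem stmt_11 {m : ℕ} (xmin xmax : Fin m → ℝ)
    (ζ : (Fin m → ℝ) → ℝ) (hζnonneg : ∀ u, 0 ≤ ζ u)
    (hζsupp : ∀ u : Fin m → ℝ, 1 < Real.sqrt (∑ i, u i ^ 2) → ζ u = 0)
    (hζint : ∫ u : Fin m → ℝ, ζ u ∂volume = 1)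
    (h : ℝ) (hh : 0 < h) (hsmall : ∀ i, h ≤ xmax i - xmin i)
    (x : Fin m → ℝ) (hx : ∀ i, xmin i ≤ x i ∧ x i ≤ xmax i) :
    ∫ y in {y : Fin m → ℝ | ∀ i, xmin i ≤ y i ∧ y i ≤ xmax i},
      reflKer xmin xmax ζ h m x y ∂volume = 1 := by
  classical
  have hζInt : Integrable ζ (volume : Measure (Fin m → ℝ)) := by
    by_contra hc
    rw [integral_undef hc] at hζint
    exact one_ne_zero hζint.symm
  have hmm : ∀ j, xmin j ≤ xmax j := fun j => by have := hsmall j; linarith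
  have hset : {y : Fin m → ℝ | ∀ i, xmin i ≤ y i ∧ y i ≤ xmax i}
      = Stmt11Aux.box xmin xmax := by
    ext y; simp [Stmt11Aux.mem_box, Set.mem_setOf_eq]
  rw [hset]
  rw [Stmt11Aux.key xmin xmax ζ hh hζInt x hmm m le_rfl xmin xmax hmm
    (fun j _ => ⟨rfl, rfl⟩)]
  have hA : (fun j : Fin m => if (j : ℕ) < m then 2 * xmin j - xmax j else xmin j)
      = fun j => 2 * xmin j - xmax j := by
    funext j; rw [if_pos j.isLt]
  have hB : (fun j : Fin m => if (j : ℕ) < m then 2 * xmax j - xmin j else xmax j)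
      = fun j => 2 * xmax j - xmin j := by
    funext j; rw [if_pos j.isLt]
  rw [hA, hB]
  -- the kernel vanishes outside the extended box
  have hz : ∀ y : Fin m → ℝ,
      y ∉ Stmt11Aux.box (fun j => 2 * xmin j - xmax j) (fun j => 2 * xmax j - xmin j) →
      reflKer xmin xmax ζ h 0 x y = 0 := by
    intro y hy
    have hex : ∃ j, ¬(2 * xmin j - xmax j ≤ y j ∧ y j ≤ 2 * xmax j - xmin j) := by
      by_contra hcon
      push_neg at hcon
      exact hy (Stmt11Aux.mem_box.2 hcon)
    obtain ⟨j, hj⟩ := hex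
    have hsq : h ^ 2 < (x j - y j) ^ 2 := by
      rcases not_and_or.1 hj with hj1 | hj1
      · push_neg at hj1
        have h1 : h < x j - y j := by
          have h2 := (hx j).1; have h3 := hsmall j; linarith
        nlinarith
      · push_neg at hj1
        have h1 : h < y j - x j := by
          have h2 := (hx j).2; have h3 := hsmall j; linarith
        nlinarith
    have hjj : 1 < ((x j - y j) / h) ^ 2 := by
      rw [div_pow, lt_div_iff₀ (by positivity)]
      linarith
    have hsum : 1 < ∑ i, ((x i - y i) / h) ^ 2 :=
      lt_of_lt_of_le hjj
        (Finset.single_le_sum (fun i _ => sq_nonneg ((x i - y i) / h)) (Finset.mem_univ j))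
    have hζ0 : ζ (fun i => (x i - y i) / h) = 0 := by
      refine hζsupp _ ?_
      rw [show (1 : ℝ) = Real.sqrt 1 by rw [Real.sqrt_one]]
      exact Real.sqrt_lt_sqrt zero_le_one hsum
    simp only [reflKer, hζ0, mul_zero]
  rw [setIntegral_eq_integral_of_forall_compl_eq_zero hz]
  -- compute the full-space integral by change of variables
  have hrw : ∀ y : Fin m → ℝ,
      reflKer xmin xmax ζ h 0 x y = (1 / h ^ m) * ζ (h⁻¹ • (x - y)) := by
    intro y
    have harg : (fun i => (x i - y i) / h) = h⁻¹ • (x - y) := by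
      funext i; simp [div_eq_inv_mul]
    simp only [reflKer, harg]
  simp only [hrw]
  rw [MeasureTheory.integral_const_mul]
  rw [show (∫ y : Fin m → ℝ, ζ (h⁻¹ • (x - y)) ∂volume)
      = ∫ y : Fin m → ℝ, ζ (h⁻¹ • y) ∂volume from
    MeasureTheory.integral_sub_left_eq_self (fun u => ζ (h⁻¹ • u)) volume x]
  rw [MeasureTheory.Measure.integral_comp_inv_smul volume ζ h]
  rw [hζint]
  have hfr : Module.finrank ℝ (Fin m → ℝ) = m := by
    rw [Module.finrank_pi]; simp
  rw [hfr, smul_eq_mul, mul_one, abs_of_pos (pow_pos hh m)]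
  field_simp
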